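/- Let F : ℝ → ℝ be continuous and let β, δ : ℝ → ℝ be twice differentiable functions on an open interval J satisfying β''(t) = −(F(t)/2)·β(t), δ''(t) = −(F(t)/2)·δ(t), β'(t)δ(t) − β(t)δ'(t) = 1, and δ(t) ≠ 0 for all t ∈ J. Then u = β/δ is three times differentiable on J, u'(t) = 1/δ(t)² > 0, and u satisfies Schwarz' equation u'''(t)/u'(t) − (3/2)·(u''(t)/u'(t))² = F(t) for all t ∈ J. (Reconstruction of the solution of Schwarz' equation from the left moving frame.) -/

import Mathlib

/-- Reconstruction of the solution of Schwarz' equation from the left moving frame: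
`u = β/δ` solves `S[u] = F`. -/
theorem schwarz_reconstruction
    (F β δ u : ℝ → ℝ) (a b : ℝ)
    (hF : Continuous F)
    (hβ1 : ∀ t ∈ Set.Ioo a b, DifferentiableAt ℝ β t)
    (hβ2 : ∀ t ∈ Set.Ioo a b, DifferentiableAt ℝ (deriv β) t)
    (hβ3 : ∀ t ∈ Set.Ioo a b, deriv (deriv β) t = -(F t / 2) * β t)
    (hδ1 : ∀ t ∈ Set.Ioo a b, DifferentiableAt ℝ δ t)
    (hδ2 : ∀ t ∈ Set.Ioo a b, DifferentiableAt ℝ (deriv δ) t)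
    (hδ3 : ∀ t ∈ Set.Ioo a b, deriv (deriv δ) t = -(F t / 2) * δ t)
    (hW : ∀ t ∈ Set.Ioo a b, deriv β t * δ t - β t * deriv δ t = 1)
    (hδ0 : ∀ t ∈ Set.Ioo a b, δ t ≠ 0)
    (hu : ∀ s, u s = β s / δ s) :
    ∀ t ∈ Set.Ioo a b,
      DifferentiableAt ℝ u t ∧
      DifferentiableAt ℝ (deriv u) t ∧
      DifferentiableAt ℝ (deriv (deriv u)) t ∧
      deriv u t = 1 / (δ t) ^ 2 ∧
      0 < deriv u t ∧
      deriv (deriv (deriv u)) t / deriv u t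
        - (3 / 2) * (deriv (deriv u) t / deriv u t) ^ 2 = F t := by
  have hueq : u = fun x => β x / δ x := funext hu
  have hopen : IsOpen (Set.Ioo a b) := isOpen_Ioo
  -- first derivative
  have hd1 : ∀ s ∈ Set.Ioo a b, deriv u s = 1 / δ s ^ 2 := by
    intro s hs
    rw [hueq, deriv_fun_div (hβ1 s hs) (hδ1 s hs) (hδ0 s hs), hW s hs]
  -- v = second derivative candidate
  have hv : ∀ s ∈ Set.Ioo a b,
      HasDerivAt (fun x => 1 / δ x ^ 2) (-(2 * δ s * deriv δ s) / (δ s ^ 2) ^ 2) s := by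
    intro s hs
    have h1 : HasDerivAt (fun x => δ x ^ 2) (2 * δ s ^ 1 * deriv δ s) s :=
      ((hδ1 s hs).hasDerivAt.pow 2).congr_deriv (by push_cast; ring)
    have h2 := h1.inv (pow_ne_zero 2 (hδ0 s hs))
    simp only [one_div]
    refine h2.congr_deriv ?_
    ring
  have hd2 : ∀ s ∈ Set.Ioo a b,
      deriv (deriv u) s = -(2 * δ s * deriv δ s) / (δ s ^ 2) ^ 2 := by
    intro s hs
    have heq : deriv u =ᶠ[nhds s] fun x => 1 / δ x ^ 2 :=
      (hopen.eventually_mem hs).mono fun x hx => hd1 x hx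
    rw [heq.deriv_eq, (hv s hs).deriv]
  intro t ht
  have hmem := hopen.eventually_mem ht
  have hδt := hδ0 t ht
  -- third derivative
  have hnum : HasDerivAt (fun x => -(2 * δ x * deriv δ x))
      (-(2 * deriv δ t * deriv δ t + 2 * δ t * (-(F t / 2) * δ t))) t := by
    have h := ((((hδ1 t ht).hasDerivAt.const_mul 2)).mul (hδ2 t ht).hasDerivAt).neg
    refine h.congr_deriv ?_
    rw [hδ3 t ht]
  have hden : HasDerivAt (fun x => (δ x ^ 2) ^ 2) (4 * δ t ^ 3 * deriv δ t) t := by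
    have heq : (fun x => (δ x ^ 2) ^ 2) = fun x => δ x ^ 4 := by
      funext x; ring
    rw [heq]
    exact ((hδ1 t ht).hasDerivAt.pow 4).congr_deriv (by push_cast; ring)
  have hw : HasDerivAt (fun x => -(2 * δ x * deriv δ x) / (δ x ^ 2) ^ 2)
      ((-(2 * deriv δ t * deriv δ t + 2 * δ t * (-(F t / 2) * δ t)) * (δ t ^ 2) ^ 2
        - -(2 * δ t * deriv δ t) * (4 * δ t ^ 3 * deriv δ t)) / ((δ t ^ 2) ^ 2) ^ 2) t :=
    hnum.div hden (pow_ne_zero 2 (pow_ne_zero 2 hδt))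
  have hd2eq : deriv (deriv u) =ᶠ[nhds t] fun x => -(2 * δ x * deriv δ x) / (δ x ^ 2) ^ 2 :=
    hmem.mono fun x hx => hd2 x hx
  have hd3 : deriv (deriv (deriv u)) t
      = (-(2 * deriv δ t * deriv δ t + 2 * δ t * (-(F t / 2) * δ t)) * (δ t ^ 2) ^ 2
        - -(2 * δ t * deriv δ t) * (4 * δ t ^ 3 * deriv δ t)) / ((δ t ^ 2) ^ 2) ^ 2 := by
    rw [hd2eq.deriv_eq, hw.deriv]
  have hu1 : DifferentiableAt ℝ u t := by
    rw [hueq]; exact (hβ1 t ht).div (hδ1 t ht) hδt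
  have hu2 : DifferentiableAt ℝ (deriv u) t := by
    have heq : deriv u =ᶠ[nhds t] fun x => 1 / δ x ^ 2 :=
      hmem.mono fun x hx => hd1 x hx
    exact (Filter.EventuallyEq.differentiableAt_iff heq).mpr (hv t ht).differentiableAt
  have hu3 : DifferentiableAt ℝ (deriv (deriv u)) t :=
    (Filter.EventuallyEq.differentiableAt_iff hd2eq).mpr hw.differentiableAt
  have hpos : 0 < deriv u t := by
    rw [hd1 t ht]; positivity
  refine ⟨hu1, hu2, hu3, hd1 t ht, hpos, ?_⟩
  rw [hd1 t ht, hd2 t ht, hd3]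
  field_simp
  ring
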